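/- (Loday's conjecture.) Let g be a (right) Leibniz algebra over a field k of characteristic zero. For every n ≥ 0, the subspace F_n of the primitive filtration of the tensor algebra T(g) is stable under the total Leibniz differential d = ⊕_m d_m : T(g) → T(g): one has d(F_n) ⊆ F_n. In particular the F_n form an increasing, exhaustive filtration of the Leibniz complex by subcomplexes, with F_0 = k. -/

import Mathlib

open scoped TensorProduct

/-- The pure tensor `x 0 ⊗ x 1 ⊗ ... ⊗ x (n-1)`, viewed inside the tensor algebra
`T(g) = ⊕ₙ g^{⊗n}`. -/
noncomputable def pt (k : Type*) [CommSemiring k] {g : Type*} [AddCommMonoid g] [Module k g]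
    {n : ℕ} (x : Fin n → g) : TensorAlgebra k g :=
  (List.ofFn fun i => TensorAlgebra.ι k (x i)).prod

/-- The degree-`n` component `g^{⊗n}` of the tensor algebra: the span of the pure tensors of
length `n`. -/
noncomputable def tensorGrade (k : Type*) [CommSemiring k] (g : Type*) [AddCommMonoid g]
    [Module k g] (n : ℕ) : Submodule k (TensorAlgebra k g) :=
  Submodule.span k {z | ∃ x : Fin n → g, z = pt k x}

namespace LodayAux

variable {k : Type*} [Field k] {g : Type*} [AddCommGroup g] [Module k g]

lemma pt_nil (x : Fin 0 → g) : pt k x = 1 := by simp [pt]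

lemma pt_snoc {m : ℕ} (x : Fin m → g) (y : g) :
    pt k (Fin.snoc x y) = pt k x * TensorAlgebra.ι k y := by
  simp only [pt, List.ofFn_succ']
  simp [List.concat_eq_append]

lemma pt_single (x : Fin 1 → g) : pt k x = TensorAlgebra.ι k (x 0) := by
  simp [pt]

/-- The parity automorphism `σ` of the tensor algebra. -/
noncomputable def sg : TensorAlgebra k g →ₐ[k] TensorAlgebra k g :=
  TensorAlgebra.lift k (-(TensorAlgebra.ι k))

@[simp] lemma sg_ι (x : g) : (sg (TensorAlgebra.ι k x) : TensorAlgebra k g)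
    = -TensorAlgebra.ι k x := by
  simp [sg, TensorAlgebra.lift_ι_apply]

lemma sg_pt {m : ℕ} (x : Fin m → g) : sg (pt k x) = ((-1 : k) ^ m) • pt k x := by
  induction m with
  | zero => simp [pt_nil]
  | succ m ih =>
      conv_lhs => rw [← Fin.snoc_init_self x]
      conv_rhs => rw [← Fin.snoc_init_self x]
      rw [pt_snoc, map_mul, ih, sg_ι, smul_mul_assoc, mul_neg, pow_succ, mul_neg_one, neg_smul, smul_neg]

section DmDev

variable (mul : g →ₗ[k] g →ₗ[k] g)

open TensorAlgebra LinearMap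

local notation "T" => TensorAlgebra k g

/-- Representation used to construct the family of derivations `Dm · y`. -/
noncomputable def phi1 : g →ₗ[k] Module.End k (T × (g →ₗ[k] T)) where
  toFun x :=
    { toFun := fun p =>
        (ι k x * p.1,
          (mulLeft k (ι k x)).comp p.2 + (mulRight k p.1).comp ((ι k).comp (mul x)))
      map_add' := by
        intro p q
        refine Prod.ext ?_ ?_
        · simp [mul_add]
        · ext y
          simp [mul_add, add_mul]
          abel
      map_smul' := by
        intro c p
        refine Prod.ext ?_ ?_
        · simp [mul_smul_comm]
        · ext y
          simp [mul_smul_comm, smul_mul_assoc] }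
  map_add' := by
    intro x x'
    refine LinearMap.ext fun p => ?_
    refine Prod.ext ?_ ?_
    · simp [add_mul, map_add]
    · refine LinearMap.ext fun y => ?_
      simp [add_mul, map_add]
      abel
  map_smul' := by
    intro c x
    refine LinearMap.ext fun p => ?_
    refine Prod.ext ?_ ?_
    · simp [smul_mul_assoc, map_smul]
    · refine LinearMap.ext fun y => ?_
      simp [smul_mul_assoc, map_smul, smul_add]

noncomputable def Th1 : TensorAlgebra k g →ₐ[k] Module.End k (T × (g →ₗ[k] T)) :=
  TensorAlgebra.lift k (phi1 mul)

/-- `Dm a y` : the value at `a` of the derivation of `T(g)` extending `x ↦ ι (mul x y)`. -/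
noncomputable def Dm : TensorAlgebra k g →ₗ[k] (g →ₗ[k] TensorAlgebra k g) where
  toFun a := (Th1 mul a (1, 0)).2
  map_add' := by intro a b; simp [map_add]
  map_smul' := by intro c a; simp [map_smul]

lemma Th1_ι (x : g) : Th1 mul (ι k x) = phi1 mul x := TensorAlgebra.lift_ι_apply _ _

@[simp] lemma Dm_ι (x : g) (y : g) : Dm mul (ι k x) y = ι k (mul x y) := by
  simp [Dm, Th1_ι, phi1]

@[simp] lemma Dm_one (y : g) : Dm mul (1 : TensorAlgebra k g) y = 0 := by
  simp [Dm]

@[simp] lemma Dm_algebraMap (r : k) (y : g) :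
    Dm mul (algebraMap k (TensorAlgebra k g) r) y = 0 := by
  have : algebraMap k (TensorAlgebra k g) r = r • (1 : TensorAlgebra k g) := by
    rw [Algebra.smul_def, mul_one]
  rw [this, map_smul]
  simp

lemma MS1 (a : TensorAlgebra k g) : ∀ (u : T) (h : g →ₗ[k] T),
    Th1 mul a (u, h) =
      (a * u, (mulRight k u).comp (Dm mul a) + (mulLeft k a).comp h) := by
  induction a using TensorAlgebra.induction with
  | algebraMap r =>
      intro u h
      rw [AlgHom.commutes, Module.algebraMap_end_apply]
      refine Prod.ext ?_ ?_
      · simp [Algebra.smul_def]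
      · ext y
        simp [Algebra.smul_def]
  | ι x =>
      intro u h
      rw [Th1_ι]
      refine Prod.ext ?_ ?_
      · simp [phi1]
      · ext y
        simp [phi1, add_comm]
  | add a b iha ihb =>
      intro u h
      rw [map_add, LinearMap.add_apply, iha, ihb, map_add]
      refine Prod.ext ?_ ?_
      · simp [add_mul]
      · ext y
        simp [add_mul]
        abel
  | mul a b iha ihb =>
      have hD : Dm mul (a * b) =
          (mulRight k b).comp (Dm mul a) + (mulLeft k a).comp (Dm mul b) := by
        have e1 : Dm mul (a * b) = (Th1 mul (a * b) (1, 0)).2 := rfl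
        rw [e1, map_mul, Module.End.mul_apply, ihb, iha]
        ext y
        simp
      intro u h
      rw [map_mul, Module.End.mul_apply, ihb, iha, hD]
      refine Prod.ext ?_ ?_
      · simp [mul_assoc]
      · ext y
        simp [mul_assoc, add_mul, mul_add]
        abel

lemma Dm_mul (a b : TensorAlgebra k g) (y : g) :
    Dm mul (a * b) y = Dm mul a y * b + a * Dm mul b y := by
  have e1 : Dm mul (a * b) = (Th1 mul (a * b) (1, 0)).2 := rfl
  rw [e1, map_mul, Module.End.mul_apply, MS1, MS1]
  simp

end DmDev

section Main3

variable (mul : g →ₗ[k] g →ₗ[k] g)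

open TensorAlgebra LinearMap

local notation "T" => TensorAlgebra k g

/-- The contraction `Φ C (y ⊗ W) = (Dm C y) * W`. -/
noncomputable def Phin (C : T) : g ⊗[k] T →ₗ[k] T :=
  TensorProduct.lift ((LinearMap.mul k T) ∘ₗ (Dm mul C))

@[simp] lemma Phin_tmul (C : T) (y : g) (W : T) :
    Phin mul C (y ⊗ₜ[k] W) = Dm mul C y * W := by
  simp [Phin]

lemma Phin_add (C C' : T) : Phin mul (C + C') = Phin mul C + Phin mul C' := by
  refine TensorProduct.ext' fun y W => ?_
  simp [map_add, add_mul]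

lemma Phin_smul (c : k) (C : T) : Phin mul (c • C) = c • Phin mul C := by
  refine TensorProduct.ext' fun y W => ?_
  simp [map_smul, smul_mul_assoc]

lemma Phin_neg (C : T) : Phin mul (-C) = -Phin mul C := by
  have := Phin_smul mul (-1 : k) C
  rw [neg_one_smul k] at this; rw [this]; exact neg_one_smul k (Phin mul C)

@[simp] lemma Phin_one : Phin mul (1 : T) = 0 := by
  refine TensorProduct.ext' fun y W => ?_
  simp

@[simp] lemma Phin_algebraMap (r : k) : Phin mul (algebraMap k T r) = 0 := by
  refine TensorProduct.ext' fun y W => ?_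
  simp

lemma Phin_mul (C C' : T) (m : g ⊗[k] T) :
    Phin mul (C * C') m =
      Phin mul C (lTensor g (mulLeft k C') m) + C * Phin mul C' m := by
  have : Phin mul (C * C') =
      (Phin mul C) ∘ₗ (lTensor g (mulLeft k C')) + (mulLeft k C) ∘ₗ (Phin mul C') := by
    refine TensorProduct.ext' fun y W => ?_
    simp [Dm_mul, add_mul, mul_assoc]
  rw [this]
  simp

lemma Phin_mulRight (C u : T) (m : g ⊗[k] T) :
    Phin mul C (lTensor g (mulRight k u) m) = Phin mul C m * u := by
  have : (Phin mul C) ∘ₗ (lTensor g (mulRight k u)) = (mulRight k u) ∘ₗ (Phin mul C) := by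
    refine TensorProduct.ext' fun y W => ?_
    simp [mul_assoc]
  have h := LinearMap.congr_fun this m
  simpa using h

lemma lT_mulRight_mul (b u : T) (m : g ⊗[k] T) :
    lTensor g (mulRight k (b * u)) m = lTensor g (mulRight k u) (lTensor g (mulRight k b) m) := by
  rw [← LinearMap.lTensor_comp_apply, ← LinearMap.mulRight_mul]

lemma lT_mulLeft_mul (a b : T) (m : g ⊗[k] T) :
    lTensor g (mulLeft k (a * b)) m = lTensor g (mulLeft k a) (lTensor g (mulLeft k b) m) := by
  rw [← LinearMap.lTensor_comp_apply, ← LinearMap.mulLeft_mul]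

lemma lT_swap (c u : T) (m : g ⊗[k] T) :
    lTensor g (mulLeft k c) (lTensor g (mulRight k u) m) =
      lTensor g (mulRight k u) (lTensor g (mulLeft k c) m) := by
  rw [← LinearMap.lTensor_comp_apply, ← LinearMap.lTensor_comp_apply]
  congr 1
  ext w
  simp [mul_assoc]

lemma mulLeft_add' (a b : T) : mulLeft k (a + b) = mulLeft k a + mulLeft k b := by
  ext w; simp [add_mul]

lemma mulLeft_smul' (c : k) (a : T) : mulLeft k (c • a) = c • mulLeft k a := by
  ext w; simp [smul_mul_assoc]

lemma mulLeft_neg' (a : T) : mulLeft k (-a) = -mulLeft k a := by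
  ext w; simp

lemma mulLeft_algebraMap' (r : k) : mulLeft k (algebraMap k T r) = r • LinearMap.id := by
  ext w; simp [Algebra.smul_def]

lemma mulRight_one' : mulRight k (1 : T) = LinearMap.id := by
  ext w; simp

set_option maxHeartbeats 1000000 in
/-- component map for `phi3`. -/
noncomputable def phi3Aux (x : g) :
    (T × (g ⊗[k] T) × T) →ₗ[k] (T × (g ⊗[k] T) × T) where
  toFun p :=
    (ι k x * p.1,
     TensorProduct.mk k g T x p.1 - lTensor g (mulLeft k (ι k x)) p.2.1,
     -(ι k x * p.2.2) - Phin mul (ι k x) p.2.1)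
  map_add' := by
    intro p q
    refine Prod.ext ?_ (Prod.ext ?_ ?_)
    · simp [mul_add]
    · simp [TensorProduct.tmul_add, map_add]
      abel
    · simp [mul_add, map_add]
      abel
  map_smul' := by
    intro c p
    refine Prod.ext ?_ (Prod.ext ?_ ?_)
    · simp [mul_smul_comm]
    · simp [TensorProduct.tmul_smul, map_smul, smul_sub]
    · simp [mul_smul_comm, map_smul, smul_sub]

@[simp] lemma phi3Aux_apply (x : g) (p : T × (g ⊗[k] T) × T) :
    phi3Aux mul x p =
      (ι k x * p.1,
       TensorProduct.mk k g T x p.1 - lTensor g (mulLeft k (ι k x)) p.2.1,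
       -(ι k x * p.2.2) - Phin mul (ι k x) p.2.1) := rfl

set_option maxHeartbeats 1000000 in
/-- The big representation producing both `Tm` (the map `T`) and `Dpr` (the differential). -/
noncomputable def phi3 : g →ₗ[k] Module.End k (T × (g ⊗[k] T) × T) where
  toFun x := phi3Aux mul x
  map_add' := by
    intro x x'
    refine LinearMap.ext fun p => ?_
    simp only [phi3Aux_apply, LinearMap.add_apply]
    refine Prod.ext ?_ (Prod.ext ?_ ?_)
    · simp [add_mul, map_add]
    · simp [map_add, TensorProduct.add_tmul, mulLeft_add', LinearMap.lTensor_add]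
      abel
    · simp [map_add, add_mul, Phin_add]
      abel
  map_smul' := by
    intro c x
    refine LinearMap.ext fun p => ?_
    simp only [phi3Aux_apply, LinearMap.smul_apply, RingHom.id_apply]
    refine Prod.ext ?_ (Prod.ext ?_ ?_)
    · simp [smul_mul_assoc, map_smul]
    · simp [map_smul, TensorProduct.smul_tmul', mulLeft_smul', LinearMap.lTensor_smul, smul_sub]
    · simp [map_smul, smul_mul_assoc, Phin_smul, smul_sub]

noncomputable def Th3 : TensorAlgebra k g →ₐ[k] Module.End k (T × (g ⊗[k] T) × T) :=
  TensorAlgebra.lift k (phi3 mul)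

lemma Th3_ι (x : g) : Th3 mul (ι k x) = phi3Aux mul x := TensorAlgebra.lift_ι_apply _ _

/-- The "Lie coproduct–type" operator `Tm`. -/
noncomputable def Tm : TensorAlgebra k g →ₗ[k] g ⊗[k] TensorAlgebra k g where
  toFun a := (Th3 mul a (1, 0, 0)).2.1
  map_add' := by intro a b; simp [map_add]
  map_smul' := by intro c a; simp [map_smul]

/-- The reconstructed Leibniz differential. -/
noncomputable def Dpr : TensorAlgebra k g →ₗ[k] TensorAlgebra k g where
  toFun a := (Th3 mul a (1, 0, 0)).2.2
  map_add' := by intro a b; simp [map_add]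
  map_smul' := by intro c a; simp [map_smul]

@[simp] lemma Tm_ι (x : g) : Tm mul (ι k x) = x ⊗ₜ[k] (1 : T) := by
  simp [Tm, Th3_ι]

@[simp] lemma Dpr_ι (x : g) : Dpr mul (ι k x) = 0 := by
  simp [Dpr, Th3_ι]

@[simp] lemma Tm_one : Tm mul (1 : T) = 0 := by simp [Tm]

@[simp] lemma Dpr_one : Dpr mul (1 : T) = 0 := by simp [Dpr]

lemma MS3 (a : TensorAlgebra k g) : ∀ (u : T) (m : g ⊗[k] T) (v : T),
    Th3 mul a (u, m, v) =
      (a * u,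
       lTensor g (mulRight k u) (Tm mul a) + lTensor g (mulLeft k (sg a)) m,
       Dpr mul a * u + sg a * v + Phin mul (sg a) m) := by
  induction a using TensorAlgebra.induction with
  | algebraMap r =>
      intro u m v
      have hsg : sg ((algebraMap k T) r) = algebraMap k T r := AlgHom.commutes _ r
      have hT : Tm mul ((algebraMap k T) r) = 0 := by
        simp [Tm, AlgHom.commutes, Module.algebraMap_end_apply]
      have hDp : Dpr mul ((algebraMap k T) r) = 0 := by
        simp [Dpr, AlgHom.commutes, Module.algebraMap_end_apply]
      rw [AlgHom.commutes, Module.algebraMap_end_apply, hsg, hT, hDp]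
      refine Prod.ext ?_ (Prod.ext ?_ ?_)
      · simp [Algebra.smul_def]
      · simp [mulLeft_algebraMap', LinearMap.lTensor_smul]
      · simp [Algebra.smul_def]
  | ι x =>
      intro u m v
      rw [Th3_ι]
      refine Prod.ext ?_ (Prod.ext ?_ ?_)
      · simp
      · simp [mulLeft_neg', LinearMap.lTensor_neg, sub_eq_add_neg]
      · simp [Phin_neg, sub_eq_add_neg]
  | add a b iha ihb =>
      intro u m v
      rw [map_add, LinearMap.add_apply, iha, ihb, map_add, map_add, map_add]
      refine Prod.ext ?_ (Prod.ext ?_ ?_)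
      · simp [add_mul]
      · simp [map_add, mulLeft_add', LinearMap.lTensor_add]
        abel
      · simp [add_mul, Phin_add]
        abel
  | mul a b iha ihb =>
      have hb0 : Th3 mul b (1, 0, 0) = (b, Tm mul b, Dpr mul b) := by
        rw [ihb]
        simp [mulRight_one', LinearMap.lTensor_id]
      have hT : Tm mul (a * b) =
          lTensor g (mulRight k b) (Tm mul a) + lTensor g (mulLeft k (sg a)) (Tm mul b) := by
        show (Th3 mul (a * b) (1, 0, 0)).2.1 = _
        rw [map_mul, Module.End.mul_apply, hb0, iha]
      have hDp : Dpr mul (a * b) =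
          Dpr mul a * b + sg a * Dpr mul b + Phin mul (sg a) (Tm mul b) := by
        show (Th3 mul (a * b) (1, 0, 0)).2.2 = _
        rw [map_mul, Module.End.mul_apply, hb0, iha]
      intro u m v
      rw [map_mul, Module.End.mul_apply, ihb, iha, hT, hDp, map_mul]
      refine Prod.ext ?_ (Prod.ext ?_ ?_)
      · simp [mul_assoc]
      · simp only [map_add, lT_mulRight_mul, lT_mulLeft_mul]
        rw [lT_swap]
        abel
      · simp only [map_add, Phin_mulRight, Phin_mul, add_mul, mul_add, mul_assoc]
        abel

lemma Tm_mul (a b : T) :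
    Tm mul (a * b) =
      lTensor g (mulRight k b) (Tm mul a) + lTensor g (mulLeft k (sg a)) (Tm mul b) := by
  show (Th3 mul (a * b) (1, 0, 0)).2.1 = _
  rw [map_mul, Module.End.mul_apply, MS3, MS3]
  simp [mulRight_one', LinearMap.lTensor_id, mul_one]

lemma Dpr_mul (a b : T) :
    Dpr mul (a * b) = Dpr mul a * b + sg a * Dpr mul b + Phin mul (sg a) (Tm mul b) := by
  show (Th3 mul (a * b) (1, 0, 0)).2.2 = _
  rw [map_mul, Module.End.mul_apply, MS3, MS3]
  simp [mulRight_one', LinearMap.lTensor_id, mul_one]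

end Main3

section KeyDev

variable (mul : g →ₗ[k] g →ₗ[k] g)

open TensorAlgebra LinearMap

local notation "T" => TensorAlgebra k g

lemma Dm_pt {m : ℕ} (x : Fin m → g) (y : g) :
    Dm mul (pt k x) y = ∑ i : Fin m, pt k (Function.update x i (mul (x i) y)) := by
  induction m with
  | zero => simp [pt_nil]
  | succ m ih =>
      conv_lhs => rw [← Fin.snoc_init_self x]
      conv_rhs => rw [← Fin.snoc_init_self x]
      rw [pt_snoc, Dm_mul, ih, Fin.sum_univ_castSucc]
      congr 1
      · rw [Finset.sum_mul]
        refine Finset.sum_congr rfl fun i _ => ?_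
        rw [Fin.snoc_castSucc, ← Fin.snoc_update, pt_snoc]
      · rw [Fin.snoc_last, Fin.update_snoc_last, pt_snoc]
        simp

lemma succAbove_snoc {m : ℕ} (x : Fin (m + 1) → g) (y : g) (j : Fin (m + 1)) :
    (fun a : Fin (m + 1) => Fin.snoc (α := fun _ => g) x y ((Fin.castSucc j).succAbove a))
      = (Fin.snoc (α := fun _ => g) (fun a : Fin m => x (j.succAbove a)) y) := by
  funext b
  induction b using Fin.lastCases with
  | last =>
    have h1 : (Fin.castSucc j).succAbove (Fin.last m) = Fin.last (m + 1) := by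
      rw [Fin.succAbove_of_le_castSucc _ _ (Fin.castSucc_le_castSucc_iff.mpr (Fin.le_last j)),
        Fin.succ_last]
    simp [h1]
  | cast b' =>
    rw [Fin.castSucc_succAbove_castSucc]
    simp

variable (D : TensorAlgebra k g →ₗ[k] TensorAlgebra k g)
variable (hD : ∀ (m : ℕ) (x : Fin (m + 1) → g),
      D (pt k x) = ∑ j : Fin (m + 1),
        ∑ i ∈ Finset.univ.filter (fun i : Fin m => i.castSucc < j),
          ((-1 : k) ^ (j : ℕ)) •
            pt k (Function.update (fun a : Fin m => x (j.succAbove a)) i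
              (mul (x i.castSucc) (x j))))
variable (hD0 : D (1 : TensorAlgebra k g) = 0)

include hD hD0 in
lemma keyD {m : ℕ} (x : Fin m → g) (y : g) :
    D (pt k x * ι k y) = D (pt k x) * ι k y +
      ((-1 : k) ^ m) • ∑ i : Fin m, pt k (Function.update x i (mul (x i) y)) := by
  cases m with
  | zero =>
      have h0 : D (ι k y) = 0 := by
        have := hD 0 (fun _ => y)
        rw [pt_single] at this
        simpa using this
      rw [pt_nil, one_mul, h0, hD0]
      simp
  | succ m' =>
      rw [← pt_snoc, hD (m' + 1) (Fin.snoc x y), hD m' x, Fin.sum_univ_castSucc]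
      congr 1
      · -- the j = castSucc j' part equals (D (pt x)) * ι y
        rw [Finset.sum_mul]
        refine Finset.sum_congr rfl fun j _ => ?_
        rw [Finset.sum_filter, Finset.sum_filter, Finset.sum_mul, Fin.sum_univ_castSucc]
        have hlast : ¬ Fin.castSucc (Fin.last m') < Fin.castSucc j :=
          fun h => absurd (Fin.castSucc_lt_castSucc_iff.mp h) (Fin.le_last j).not_gt
        rw [if_neg hlast, add_zero]
        refine Finset.sum_congr rfl fun i _ => ?_
        by_cases hij : Fin.castSucc i < j
        · rw [if_pos (Fin.castSucc_lt_castSucc_iff.mpr hij), if_pos hij]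
          rw [succAbove_snoc, Fin.snoc_castSucc, Fin.snoc_castSucc, ← Fin.snoc_update, pt_snoc]
          rw [Fin.coe_castSucc, smul_mul_assoc]
        · rw [if_neg (fun h => hij (Fin.castSucc_lt_castSucc_iff.mp h)), if_neg hij, zero_mul]
      · -- the j = last part
        have h1 : Fin.succAbove (Fin.last (m' + 1)) = Fin.castSucc := Fin.succAbove_last
        rw [Finset.smul_sum]
        rw [Finset.sum_filter]
        refine Finset.sum_congr rfl fun i _ => ?_
        rw [if_pos (Fin.castSucc_lt_last i)]
        simp [h1]

end KeyDev

section Agree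

variable (mul : g →ₗ[k] g →ₗ[k] g)

open TensorAlgebra LinearMap

local notation "T" => TensorAlgebra k g

lemma Dpr_key {m : ℕ} (x : Fin m → g) (y : g) :
    Dpr mul (pt k x * ι k y) = Dpr mul (pt k x) * ι k y +
      ((-1 : k) ^ m) • ∑ i : Fin m, pt k (Function.update x i (mul (x i) y)) := by
  rw [Dpr_mul, Dpr_ι, mul_zero, add_zero, Tm_ι, sg_pt, Phin_smul, LinearMap.smul_apply,
    Phin_tmul, Dm_pt, mul_one]

lemma spanPure :
    Submodule.span k {z : TensorAlgebra k g | ∃ (m : ℕ) (x : Fin m → g), z = pt k x} = ⊤ := by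
  set S := Submodule.span k {z : TensorAlgebra k g | ∃ (m : ℕ) (x : Fin m → g), z = pt k x}
    with hS
  have h1 : (1 : T) ∈ S :=
    Submodule.subset_span ⟨0, fun i => i.elim0, by rw [pt_nil]⟩
  have hmulι : ∀ z ∈ S, ∀ w : g, z * ι k w ∈ S := by
    intro z hz w
    induction hz using Submodule.span_induction with
    | mem z hmem =>
        obtain ⟨m, x, rfl⟩ := hmem
        exact Submodule.subset_span ⟨m + 1, Fin.snoc x w, by rw [pt_snoc]⟩
    | zero => rw [zero_mul]; exact Submodule.zero_mem _
    | add a b _ _ ha hb => rw [add_mul]; exact Submodule.add_mem _ ha hb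
    | smul c a _ ha => rw [smul_mul_assoc]; exact Submodule.smul_mem _ _ ha
  have hmulpt : ∀ (m : ℕ) (x : Fin m → g), ∀ z ∈ S, z * pt k x ∈ S := by
    intro m
    induction m with
    | zero => intro x z hz; rw [pt_nil, mul_one]; exact hz
    | succ m ih =>
        intro x z hz
        rw [← Fin.snoc_init_self x, pt_snoc, ← mul_assoc]
        exact hmulι _ (ih _ _ hz) _
  rw [eq_top_iff]
  have key : ∀ z : T, z ∈ S := by
    intro z
    induction z using TensorAlgebra.induction with
  | algebraMap r =>
      rw [Algebra.algebraMap_eq_smul_one]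
      exact Submodule.smul_mem _ _ h1
  | ι x => exact Submodule.subset_span ⟨1, fun _ => x, by rw [pt_single]⟩
  | add a b ha hb => exact Submodule.add_mem _ ha hb
  | mul a b ha hb =>
      induction hb using Submodule.span_induction with
      | mem zz hmem =>
          obtain ⟨m, x, rfl⟩ := hmem
          exact hmulpt m x a ha
      | zero => rw [mul_zero]; exact Submodule.zero_mem _
      | add u v _ _ hu hv => rw [mul_add]; exact Submodule.add_mem _ hu hv
      | smul c u _ hu => rw [mul_smul_comm]; exact Submodule.smul_mem _ _ hu
  exact fun z _ => key z

variable (D : TensorAlgebra k g →ₗ[k] TensorAlgebra k g)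
variable (hD : ∀ (m : ℕ) (x : Fin (m + 1) → g),
      D (pt k x) = ∑ j : Fin (m + 1),
        ∑ i ∈ Finset.univ.filter (fun i : Fin m => i.castSucc < j),
          ((-1 : k) ^ (j : ℕ)) •
            pt k (Function.update (fun a : Fin m => x (j.succAbove a)) i
              (mul (x i.castSucc) (x j))))
variable (hD0 : D (1 : TensorAlgebra k g) = 0)

include hD hD0 in
lemma D_agree_pt : ∀ (m : ℕ) (x : Fin m → g), D (pt k x) = Dpr mul (pt k x) := by
  intro m
  induction m with
  | zero => intro x; rw [pt_nil, hD0]; exact (Dpr_one mul).symm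
  | succ m ih =>
      intro x
      conv_lhs => rw [← Fin.snoc_init_self x]
      conv_rhs => rw [← Fin.snoc_init_self x]
      rw [pt_snoc, keyD mul D hD hD0, Dpr_key, ih]

include hD hD0 in
lemma D_eq_Dpr : ∀ z : TensorAlgebra k g, D z = Dpr mul z := by
  intro z
  have hz : z ∈ Submodule.span k
      {z : TensorAlgebra k g | ∃ (m : ℕ) (x : Fin m → g), z = pt k x} := by
    rw [spanPure]; trivial
  induction hz using Submodule.span_induction with
  | mem z hmem =>
      obtain ⟨m, x, rfl⟩ := hmem
      exact D_agree_pt mul D hD hD0 m x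
  | zero => rw [map_zero, map_zero]
  | add a b _ _ ha hb => rw [map_add, map_add, ha, hb]
  | smul c a _ ha => rw [map_smul, map_smul, ha]

end Agree

section Lfacts

variable (mul : g →ₗ[k] g →ₗ[k] g)

open TensorAlgebra LinearMap

local notation "T" => TensorAlgebra k g

variable (L : ℕ → Submodule k (TensorAlgebra k g))
variable (hL1 : L 1 = tensorGrade k g 1)
variable (hLsucc : ∀ n : ℕ, 1 ≤ n → L (n + 1) =
      Submodule.span k {z | ∃ X ∈ L n, ∃ y : g,
        z = X * TensorAlgebra.ι k y - ((-1 : k) ^ n) • (TensorAlgebra.ι k y * X)})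

include hL1 in
lemma L1_range : L 1 = LinearMap.range (ι k : g →ₗ[k] T) := by
  rw [hL1]
  unfold tensorGrade
  have hset : {z : T | ∃ x : Fin 1 → g, z = pt k x} = Set.range (ι k : g →ₗ[k] T) := by
    ext z
    constructor
    · rintro ⟨x, rfl⟩; exact ⟨x 0, (pt_single x).symm⟩
    · rintro ⟨v, rfl⟩; exact ⟨fun _ => v, by rw [pt_single]⟩
  rw [hset, ← LinearMap.coe_range, Submodule.span_eq]

include hL1 hLsucc in
lemma sg_L : ∀ t : ℕ, 1 ≤ t → ∀ X ∈ L t, sg X = ((-1 : k) ^ t) • X := by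
  intro t ht
  induction t, ht using Nat.le_induction with
  | base =>
      intro X hX
      rw [L1_range L hL1] at hX
      obtain ⟨v, rfl⟩ := hX
      rw [sg_ι]
      module
  | succ n hn ih =>
      intro X hX
      rw [hLsucc n hn] at hX
      induction hX using Submodule.span_induction with
      | mem z hmem =>
          obtain ⟨X', hX', y, rfl⟩ := hmem
          rw [map_sub, map_smul, map_mul, map_mul, sg_ι, ih X' hX']
          simp only [smul_mul_assoc, mul_smul_comm, neg_mul, mul_neg, smul_neg, neg_smul,
            mul_one, one_mul, smul_smul, map_zero, zero_add, add_zero, smul_zero,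
            LinearMap.smul_apply, LinearMap.lTensor_tmul, LinearMap.mulRight_apply,
            LinearMap.mulLeft_apply, TensorProduct.tmul_neg, TensorProduct.tmul_smul,
            mulLeft_smul', LinearMap.lTensor_smul, zero_mul, mul_zero, Phin_tmul]
          module
      | zero => rw [map_zero, smul_zero]
      | add a b _ _ ha hb => rw [map_add, ha, hb, smul_add]
      | smul c a _ ha => rw [map_smul, ha, smul_comm]

include hL1 hLsucc in
lemma Dm_L : ∀ t : ℕ, 1 ≤ t → ∀ X ∈ L t, ∀ y : g, Dm mul X y ∈ L t := by
  intro t ht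
  induction t, ht using Nat.le_induction with
  | base =>
      intro X hX y
      rw [L1_range L hL1] at hX ⊢
      obtain ⟨v, rfl⟩ := hX
      rw [Dm_ι]
      exact LinearMap.mem_range_self _ _
  | succ n hn ih =>
      intro X hX y
      rw [hLsucc n hn] at hX ⊢
      induction hX using Submodule.span_induction with
      | mem z hmem =>
          obtain ⟨X', hX', y', rfl⟩ := hmem
          have heq : Dm mul (X' * ι k y' - ((-1 : k) ^ n) • (ι k y' * X')) y =
              (Dm mul X' y * ι k y' - ((-1 : k) ^ n) • (ι k y' * Dm mul X' y)) +
              (X' * ι k (mul y' y) - ((-1 : k) ^ n) • (ι k (mul y' y) * X')) := by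
            rw [map_sub, map_smul, LinearMap.sub_apply, LinearMap.smul_apply,
              Dm_mul, Dm_mul, Dm_ι]
            module
          rw [heq]
          refine Submodule.add_mem _ ?_ ?_
          · exact Submodule.subset_span ⟨Dm mul X' y, ih X' hX' y, y', rfl⟩
          · exact Submodule.subset_span ⟨X', hX', mul y' y, rfl⟩
      | zero => rw [map_zero, LinearMap.zero_apply]; exact Submodule.zero_mem _
      | add a b _ _ ha hb =>
          rw [map_add, LinearMap.add_apply]; exact Submodule.add_mem _ ha hb
      | smul c a _ ha =>
          rw [map_smul, LinearMap.smul_apply]; exact Submodule.smul_mem _ _ ha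

include hL1 hLsucc in
lemma Tm_L : ∀ t : ℕ, 2 ≤ t → ∀ X ∈ L t, Tm mul X = 0 := by
  intro t ht
  induction t, ht using Nat.le_induction with
  | base =>
      intro X hX
      rw [hLsucc 1 le_rfl] at hX
      induction hX using Submodule.span_induction with
      | mem z hmem =>
          obtain ⟨X', hX', y, rfl⟩ := hmem
          rw [L1_range L hL1] at hX'
          obtain ⟨v, rfl⟩ := hX'
          rw [map_sub, map_smul, Tm_mul, Tm_mul, Tm_ι, Tm_ι, sg_ι, sg_ι]
          simp only [smul_mul_assoc, mul_smul_comm, neg_mul, mul_neg, smul_neg, neg_smul,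
            mul_one, one_mul, smul_smul, map_zero, zero_add, add_zero, smul_zero,
            LinearMap.smul_apply, LinearMap.lTensor_tmul, LinearMap.mulRight_apply,
            LinearMap.mulLeft_apply, TensorProduct.tmul_neg, TensorProduct.tmul_smul,
            mulLeft_smul', LinearMap.lTensor_smul, zero_mul, mul_zero, Phin_tmul]
          module
      | zero => rw [map_zero]
      | add a b _ _ ha hb => rw [map_add, ha, hb, add_zero]
      | smul c a _ ha => rw [map_smul, ha, smul_zero]
  | succ n hn ih =>
      intro X hX
      have hn1 : 1 ≤ n := by omega
      rw [hLsucc n hn1] at hX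
      induction hX using Submodule.span_induction with
      | mem z hmem =>
          obtain ⟨X', hX', y, rfl⟩ := hmem
          rw [map_sub, map_smul, Tm_mul, Tm_mul, Tm_ι, ih X' hX',
            sg_L L hL1 hLsucc n hn1 X' hX']
          simp only [smul_mul_assoc, mul_smul_comm, neg_mul, mul_neg, smul_neg, neg_smul,
            mul_one, one_mul, smul_smul, map_zero, zero_add, add_zero, smul_zero,
            LinearMap.smul_apply, LinearMap.lTensor_tmul, LinearMap.mulRight_apply,
            LinearMap.mulLeft_apply, TensorProduct.tmul_neg, TensorProduct.tmul_smul,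
            mulLeft_smul', LinearMap.lTensor_smul, zero_mul, mul_zero, Phin_tmul]
          module
      | zero => rw [map_zero]
      | add a b _ _ ha hb => rw [map_add, ha, hb, add_zero]
      | smul c a _ ha => rw [map_smul, ha, smul_zero]

include hL1 hLsucc in
lemma Dpr_L : ∀ n : ℕ, 1 ≤ n → ∀ X ∈ L (n + 1), Dpr mul X ∈ L n := by
  intro n hn
  induction n, hn using Nat.le_induction with
  | base =>
      intro X hX
      rw [hLsucc 1 le_rfl] at hX
      induction hX using Submodule.span_induction with
      | mem z hmem =>
          obtain ⟨X', hX', y, rfl⟩ := hmem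
          rw [L1_range L hL1] at hX'
          obtain ⟨v, rfl⟩ := hX'
          have heq : Dpr mul (ι k v * ι k y - ((-1 : k) ^ 1) • (ι k y * ι k v)) =
              -ι k (mul v y) - ι k (mul y v) := by
            rw [map_sub, map_smul, Dpr_mul, Dpr_mul]
            simp only [Dpr_ι, Tm_ι, sg_ι, map_zero, Phin_smul, Phin_neg, LinearMap.neg_apply,
              Phin_tmul, Dm_ι, smul_mul_assoc, mul_smul_comm, neg_mul, mul_neg, smul_neg,
              neg_smul, mul_one, one_mul, smul_smul, zero_add, add_zero, smul_zero,
              LinearMap.smul_apply, zero_mul, mul_zero]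
            module
          rw [heq, L1_range L hL1]
          exact Submodule.sub_mem _ (Submodule.neg_mem _ (LinearMap.mem_range_self _ _))
            (LinearMap.mem_range_self _ _)
      | zero => rw [map_zero]; exact Submodule.zero_mem _
      | add a b _ _ ha hb => rw [map_add]; exact Submodule.add_mem _ ha hb
      | smul c a _ ha => rw [map_smul]; exact Submodule.smul_mem _ _ ha
  | succ n hn ih =>
      intro X hX
      have hn1 : 1 ≤ n + 1 := by omega
      rw [hLsucc (n + 1) hn1] at hX
      induction hX using Submodule.span_induction with
      | mem z hmem =>
          obtain ⟨X', hX', y, rfl⟩ := hmem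
          have heq : Dpr mul (X' * ι k y - ((-1 : k) ^ (n + 1)) • (ι k y * X')) =
              (Dpr mul X' * ι k y - ((-1 : k) ^ n) • (ι k y * Dpr mul X')) +
              ((-1 : k) ^ (n + 1)) • Dm mul X' y := by
            rw [map_sub, map_smul, Dpr_mul, Dpr_mul,
              Tm_L mul L hL1 hLsucc (n + 1) (by omega) X' hX',
              sg_L L hL1 hLsucc (n + 1) hn1 X' hX']
            simp only [Dpr_ι, Tm_ι, sg_ι, map_zero, Phin_smul, Phin_neg, LinearMap.neg_apply,
              Phin_tmul, Dm_ι, smul_mul_assoc, mul_smul_comm, neg_mul, mul_neg, smul_neg,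
              neg_smul, mul_one, one_mul, smul_smul, zero_add, add_zero, smul_zero,
              LinearMap.smul_apply, zero_mul, mul_zero]
            module
          rw [heq]
          refine Submodule.add_mem _ ?_ (Submodule.smul_mem _ _
            (Dm_L mul L hL1 hLsucc (n + 1) hn1 X' hX' y))
          rw [hLsucc n hn]
          exact Submodule.subset_span ⟨Dpr mul X', ih X' hX', y, rfl⟩
      | zero => rw [map_zero]; exact Submodule.zero_mem _
      | add a b _ _ ha hb => rw [map_add]; exact Submodule.add_mem _ ha hb
      | smul c a _ ha => rw [map_smul]; exact Submodule.smul_mem _ _ ha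

end Lfacts

section Ffacts

variable (mul : g →ₗ[k] g →ₗ[k] g)

open TensorAlgebra LinearMap

local notation "T" => TensorAlgebra k g

variable (L : ℕ → Submodule k (TensorAlgebra k g))
variable (hL1 : L 1 = tensorGrade k g 1)
variable (hLsucc : ∀ n : ℕ, 1 ≤ n → L (n + 1) =
      Submodule.span k {z | ∃ X ∈ L n, ∃ y : g,
        z = X * TensorAlgebra.ι k y - ((-1 : k) ^ n) • (TensorAlgebra.ι k y * X)})
variable (F : ℕ → Submodule k (TensorAlgebra k g))
variable (hF0 : F 0 = Submodule.span k {(1 : TensorAlgebra k g)})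
variable (hFsucc : ∀ n : ℕ, F (n + 1) = F n ⊔
      Submodule.span k {z | ∃ X ∈ F n, ∃ t : ℕ, 1 ≤ t ∧ ∃ Y ∈ L t, z = X * Y})

include hFsucc in
lemma F_mono : ∀ n : ℕ, F n ≤ F (n + 1) := by
  intro n; rw [hFsucc n]; exact le_sup_left

include hL1 hLsucc hF0 hFsucc in
lemma sg_F : ∀ n : ℕ, ∀ Z ∈ F n, sg Z ∈ F n := by
  intro n
  induction n with
  | zero =>
      intro Z hZ
      rw [hF0] at hZ ⊢
      induction hZ using Submodule.span_induction with
      | mem z hmem =>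
          rw [Set.mem_singleton_iff] at hmem
          subst hmem
          rw [map_one]
          exact Submodule.subset_span rfl
      | zero => rw [map_zero]; exact Submodule.zero_mem _
      | add a b _ _ ha hb => rw [map_add]; exact Submodule.add_mem _ ha hb
      | smul c a _ ha => rw [map_smul]; exact Submodule.smul_mem _ _ ha
  | succ n ih =>
      intro Z hZ
      rw [hFsucc n] at hZ ⊢
      obtain ⟨z1, h1, z2, h2, rfl⟩ := Submodule.mem_sup.mp hZ
      clear hZ
      rw [map_add]
      refine Submodule.add_mem _ (Submodule.mem_sup_left (ih z1 h1)) (Submodule.mem_sup_right ?_)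
      induction h2 using Submodule.span_induction with
      | mem z hmem =>
          obtain ⟨X, hX, t, ht, Y, hY, rfl⟩ := hmem
          rw [map_mul, sg_L L hL1 hLsucc t ht Y hY, mul_smul_comm]
          exact Submodule.smul_mem _ _
            (Submodule.subset_span ⟨sg X, ih X hX, t, ht, Y, hY, rfl⟩)
      | zero => rw [map_zero]; exact Submodule.zero_mem _
      | add a b _ _ ha hb => rw [map_add]; exact Submodule.add_mem _ ha hb
      | smul c a _ ha => rw [map_smul]; exact Submodule.smul_mem _ _ ha

include hL1 hLsucc hF0 hFsucc in
lemma Dm_F : ∀ n : ℕ, ∀ y : g, ∀ Z ∈ F n, Dm mul Z y ∈ F n := by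
  intro n
  induction n with
  | zero =>
      intro y Z hZ
      rw [hF0] at hZ ⊢
      induction hZ using Submodule.span_induction with
      | mem z hmem =>
          rw [Set.mem_singleton_iff] at hmem
          subst hmem
          rw [show Dm mul (1 : T) y = 0 from Dm_one mul y]
          exact Submodule.zero_mem _
      | zero => rw [map_zero, LinearMap.zero_apply]; exact Submodule.zero_mem _
      | add a b _ _ ha hb =>
          rw [map_add, LinearMap.add_apply]; exact Submodule.add_mem _ ha hb
      | smul c a _ ha =>
          rw [map_smul, LinearMap.smul_apply]; exact Submodule.smul_mem _ _ ha
  | succ n ih =>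
      intro y Z hZ
      rw [hFsucc n] at hZ ⊢
      obtain ⟨z1, h1, z2, h2, rfl⟩ := Submodule.mem_sup.mp hZ
      clear hZ
      rw [map_add, LinearMap.add_apply]
      refine Submodule.add_mem _ (Submodule.mem_sup_left (ih y z1 h1)) (Submodule.mem_sup_right ?_)
      induction h2 using Submodule.span_induction with
      | mem z hmem =>
          obtain ⟨X, hX, t, ht, Y, hY, rfl⟩ := hmem
          rw [Dm_mul]
          refine Submodule.add_mem _ ?_ ?_
          · exact Submodule.subset_span ⟨Dm mul X y, ih y X hX, t, ht, Y, hY, rfl⟩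
          · exact Submodule.subset_span
              ⟨X, hX, t, ht, Dm mul Y y, Dm_L mul L hL1 hLsucc t ht Y hY y, rfl⟩
      | zero => rw [map_zero, LinearMap.zero_apply]; exact Submodule.zero_mem _
      | add a b _ _ ha hb =>
          rw [map_add, LinearMap.add_apply]; exact Submodule.add_mem _ ha hb
      | smul c a _ ha =>
          rw [map_smul, LinearMap.smul_apply]; exact Submodule.smul_mem _ _ ha

include hL1 hLsucc hF0 hFsucc in
lemma Dpr_F : ∀ n : ℕ, ∀ Z ∈ F n, Dpr mul Z ∈ F n := by
  intro n
  induction n with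
  | zero =>
      intro Z hZ
      rw [hF0] at hZ ⊢
      induction hZ using Submodule.span_induction with
      | mem z hmem =>
          rw [Set.mem_singleton_iff] at hmem
          subst hmem
          rw [Dpr_one]
          exact Submodule.zero_mem _
      | zero => rw [map_zero]; exact Submodule.zero_mem _
      | add a b _ _ ha hb => rw [map_add]; exact Submodule.add_mem _ ha hb
      | smul c a _ ha => rw [map_smul]; exact Submodule.smul_mem _ _ ha
  | succ n ih =>
      intro Z hZ
      rw [hFsucc n] at hZ ⊢
      obtain ⟨z1, h1, z2, h2, rfl⟩ := Submodule.mem_sup.mp hZ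
      clear hZ
      rw [map_add]
      refine Submodule.add_mem _ (Submodule.mem_sup_left (ih z1 h1)) ?_
      induction h2 using Submodule.span_induction with
      | mem z hmem =>
          obtain ⟨X, hX, t, ht, Y, hY, rfl⟩ := hmem
          rw [Dpr_mul]
          refine Submodule.add_mem _ (Submodule.add_mem _ ?_ ?_) ?_
          · exact Submodule.mem_sup_right
              (Submodule.subset_span ⟨Dpr mul X, ih X hX, t, ht, Y, hY, rfl⟩)
          · -- sg X * Dpr Y
            rcases eq_or_lt_of_le ht with h1t | h2t
            · -- t = 1 : Dpr Y = 0
              obtain ⟨v, rfl⟩ : ∃ v, Y = ι k v := by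
                have := hY
                rw [← h1t, L1_range L hL1] at this
                obtain ⟨v, hv⟩ := this
                exact ⟨v, hv.symm⟩
              rw [Dpr_ι, mul_zero]
              exact Submodule.zero_mem _
            · -- t ≥ 2
              obtain ⟨s, rfl⟩ : ∃ s, t = s + 1 := ⟨t - 1, by omega⟩
              have hs : 1 ≤ s := by omega
              exact Submodule.mem_sup_right (Submodule.subset_span
                ⟨sg X, sg_F L hL1 hLsucc F hF0 hFsucc n X hX, s, hs,
                  Dpr mul Y, Dpr_L mul L hL1 hLsucc s hs Y hY, rfl⟩)
          · -- Phin (sg X) (Tm Y)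
            rcases eq_or_lt_of_le ht with h1t | h2t
            · obtain ⟨v, rfl⟩ : ∃ v, Y = ι k v := by
                have := hY
                rw [← h1t, L1_range L hL1] at this
                obtain ⟨v, hv⟩ := this
                exact ⟨v, hv.symm⟩
              rw [Tm_ι, Phin_tmul, mul_one]
              exact Submodule.mem_sup_left (Dm_F mul L hL1 hLsucc F hF0 hFsucc n v (sg X)
                (sg_F L hL1 hLsucc F hF0 hFsucc n X hX))
            · rw [Tm_L mul L hL1 hLsucc t h2t Y hY, map_zero]
              exact Submodule.zero_mem _
      | zero => rw [map_zero]; exact Submodule.zero_mem _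
      | add a b _ _ ha hb => rw [map_add]; exact Submodule.add_mem _ ha hb
      | smul c a _ ha => rw [map_smul]; exact Submodule.smul_mem _ _ ha

include hF0 hFsucc in
lemma mul_F : ∀ m : ℕ, ∀ b ∈ F m, ∀ n : ℕ, ∀ a ∈ F n, a * b ∈ F (n + m) := by
  intro m
  induction m with
  | zero =>
      intro b hb n a ha
      rw [hF0] at hb
      induction hb using Submodule.span_induction with
      | mem z hmem =>
          rw [Set.mem_singleton_iff] at hmem
          subst hmem
          rw [mul_one]
          exact ha
      | zero => rw [mul_zero]; exact Submodule.zero_mem _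
      | add u v _ _ hu hv => rw [mul_add]; exact Submodule.add_mem _ hu hv
      | smul c u _ hu => rw [mul_smul_comm]; exact Submodule.smul_mem _ _ hu
  | succ m ih =>
      intro b hb n a ha
      rw [hFsucc m] at hb
      obtain ⟨b1, h1, b2, h2, rfl⟩ := Submodule.mem_sup.mp hb
      clear hb
      rw [mul_add]
      refine Submodule.add_mem _ (F_mono L F hFsucc (n + m) (ih b1 h1 n a ha)) ?_
      induction h2 using Submodule.span_induction with
      | mem z hmem =>
          obtain ⟨X, hX, t, ht, Y, hY, rfl⟩ := hmem
          rw [← mul_assoc]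
          show a * X * Y ∈ F ((n + m) + 1)
          rw [hFsucc (n + m)]
          exact Submodule.mem_sup_right (Submodule.subset_span
            ⟨a * X, ih X hX n a ha, t, ht, Y, hY, rfl⟩)
      | zero => rw [mul_zero]; exact Submodule.zero_mem _
      | add u v _ _ hu hv => rw [mul_add]; exact Submodule.add_mem _ hu hv
      | smul c u _ hu => rw [mul_smul_comm]; exact Submodule.smul_mem _ _ hu

include hL1 hF0 hFsucc in
lemma F_iSup : (⨆ n : ℕ, F n) = ⊤ := by
  have hdir : Directed (· ≤ ·) F :=
    (monotone_nat_of_le_succ (F_mono L F hFsucc)).directed_le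
  rw [eq_top_iff]
  have key : ∀ z : T, ∃ i, z ∈ F i := by
    intro z
    induction z using TensorAlgebra.induction with
    | algebraMap r =>
        refine ⟨0, ?_⟩
        rw [hF0, Algebra.algebraMap_eq_smul_one]
        exact Submodule.smul_mem _ _ (Submodule.subset_span rfl)
    | ι x =>
        refine ⟨1, ?_⟩
        rw [hFsucc 0]
        refine Submodule.mem_sup_right (Submodule.subset_span ⟨1, ?_, 1, le_rfl, ι k x, ?_, ?_⟩)
        · rw [hF0]; exact Submodule.subset_span rfl
        · rw [L1_range L hL1]; exact LinearMap.mem_range_self _ _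
        · rw [one_mul]
    | add a b ha hb =>
        obtain ⟨n, hn⟩ := ha
        obtain ⟨m, hm⟩ := hb
        refine ⟨max n m, Submodule.add_mem _ ?_ ?_⟩
        · exact (monotone_nat_of_le_succ (F_mono L F hFsucc)) (le_max_left n m) hn
        · exact (monotone_nat_of_le_succ (F_mono L F hFsucc)) (le_max_right n m) hm
    | mul a b ha hb =>
        obtain ⟨n, hn⟩ := ha
        obtain ⟨m, hm⟩ := hb
        exact ⟨n + m, mul_F L F hF0 hFsucc m b hm n a hn⟩
  intro z _
  rw [Submodule.mem_iSup_of_directed F hdir]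
  exact key z

end Ffacts

end LodayAux


/-- Loday's conjecture: for a (right) Leibniz algebra `g` over a field `k`
of characteristic zero, every stage `F n` of the primitive filtration of the tensor algebra
is stable under the total Leibniz differential `D` (here `hD0 : D 1 = 0` records the
convention on the degree-`0` part), and the `F n` form an increasing, exhaustive filtration
with `F 0 = k·1`.  Here `F 0 = span {1}` and
`F (n+1) = F n ⊔ span {X * Y | X ∈ F n, Y ∈ L t, t ≥ 1}`, which is the inductive form of
"`F n` is spanned by `1` together with all products `X₁⊗…⊗X_j`, `1 ≤ j ≤ n`, `Xᵢ ∈ L_{mᵢ}`". -/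
theorem loday_conjecture_primitive_filtration_stable
    {k : Type*} [Field k] [CharZero k]
    {g : Type*} [AddCommGroup g] [Module k g]
    (mul : g →ₗ[k] g →ₗ[k] g)
    (hleib : ∀ x y z : g, mul x (mul y z) = mul (mul x y) z - mul (mul x z) y)
    (D : TensorAlgebra k g →ₗ[k] TensorAlgebra k g)
    (hD : ∀ (m : ℕ) (x : Fin (m + 1) → g),
      D (pt k x) = ∑ j : Fin (m + 1),
        ∑ i ∈ Finset.univ.filter (fun i : Fin m => i.castSucc < j),
          ((-1 : k) ^ (j : ℕ)) •
            pt k (Function.update (fun a : Fin m => x (j.succAbove a)) i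
              (mul (x i.castSucc) (x j))))
    (L : ℕ → Submodule k (TensorAlgebra k g))
    (hL1 : L 1 = tensorGrade k g 1)
    (hLsucc : ∀ n : ℕ, 1 ≤ n → L (n + 1) =
      Submodule.span k {z | ∃ X ∈ L n, ∃ y : g,
        z = X * TensorAlgebra.ι k y - ((-1 : k) ^ n) • (TensorAlgebra.ι k y * X)})
    (hD0 : D (1 : TensorAlgebra k g) = 0)
    (F : ℕ → Submodule k (TensorAlgebra k g))
    (hF0 : F 0 = Submodule.span k {(1 : TensorAlgebra k g)})
    (hFsucc : ∀ n : ℕ, F (n + 1) = F n ⊔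
      Submodule.span k {z | ∃ X ∈ F n, ∃ t : ℕ, 1 ≤ t ∧ ∃ Y ∈ L t, z = X * Y}) :
    (∀ n : ℕ, ∀ Z ∈ F n, D Z ∈ F n) ∧
    (∀ n : ℕ, F n ≤ F (n + 1)) ∧
    (⨆ n : ℕ, F n) = ⊤ := by
  refine ⟨?_, ?_, ?_⟩
  · intro n Z hZ
    rw [LodayAux.D_eq_Dpr mul D hD hD0 Z]
    exact LodayAux.Dpr_F mul L hL1 hLsucc F hF0 hFsucc n Z hZ
  · exact LodayAux.F_mono L F hFsucc
  · exact LodayAux.F_iSup L hL1 F hF0 hFsucc
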